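/- arXiv:2310.03935 — 2 statements merged into one kernel-verified Lean document; each statement's English description precedes it below -/
import Mathlib

section
/- Let A : 𝔪 → 𝔪 be a metric operator and define ⟨U,V⟩ := (AU, V) for U, V ∈ 𝔪. Then for a vector X ∈ 𝔤 the following are equivalent: (a) ⟨[X,Y]_𝔪, X_𝔪⟩ = 0 for all Y ∈ 𝔪; (b) [X, A X_𝔪]_𝔪 = 0. (Here X_𝔪 is the (·,·)-orthogonal projection of X onto 𝔪 and [·]_𝔪 denotes the (·,·)-orthogonal projection of an element of 𝔤 onto 𝔪.) -/
open scoped InnerProductSpace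

/-- geodesic condition of Kowalski–Vanhecke, reformulated.
Setting: `𝔤` is the Lie algebra of a compact Lie group carrying an `Ad(G)`-invariant inner
product `(·,·)` (so each `Ad h` is a linear isometry and `([Z,U],V) + (U,[Z,V]) = 0`),
`𝔪 = 𝔥ᗮ`, and `A` is a metric operator on `𝔪` with associated invariant-metric inner product
`⟨U,V⟩ = (A U, V)`.  For `X ∈ 𝔤` the following are equivalent:
(a) `⟨[X,Y]_𝔪, X_𝔪⟩ = 0` for all `Y ∈ 𝔪`;  (b) `[X, A X_𝔪]_𝔪 = 0`. -/
theorem statement_11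
    {𝔤 : Type*} [NormedAddCommGroup 𝔤] [InnerProductSpace ℝ 𝔤] [FiniteDimensional ℝ 𝔤]
    [LieRing 𝔤] [LieAlgebra ℝ 𝔤]
    {H : Type*} [Group H] (Ad : H →* 𝔤 ≃ₗᵢ[ℝ] 𝔤)
    (𝔥 : @Submodule ℝ 𝔤 _ (AddCommGroup.toAddCommMonoid (self := NormedAddCommGroup.toAddCommGroup))
      (NormedSpace.toModule (self := InnerProductSpace.toNormedSpace)))
    (hm_inv : ∀ (h : H), ∀ x ∈ 𝔥ᗮ, Ad h x ∈ 𝔥ᗮ)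
    -- `(·,·)` is `Ad(G)`-invariant, hence `ad`-invariant:
    (hinner_inv : ∀ Z U V : 𝔤, ⟪⁅Z, U⁆, V⟫_ℝ + ⟪U, ⁅Z, V⁆⟫_ℝ = 0)
    (A : ↥𝔥ᗮ →ₗ[ℝ] ↥𝔥ᗮ)
    (hA_pos : ∀ X : ↥𝔥ᗮ, X ≠ 0 → 0 < ⟪(A X : 𝔤), (X : 𝔤)⟫_ℝ)
    (hA_sa : ∀ X Y : ↥𝔥ᗮ, ⟪(A X : 𝔤), (Y : 𝔤)⟫_ℝ = ⟪(X : 𝔤), (A Y : 𝔤)⟫_ℝ)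
    (hA_comm : ∀ (h : H) (X : ↥𝔥ᗮ) (hX : Ad h (X : 𝔤) ∈ 𝔥ᗮ),
      (A ⟨Ad h (X : 𝔤), hX⟩ : 𝔤) = Ad h (A X : 𝔤))
    (X : 𝔤) :
    (∀ Y : ↥𝔥ᗮ,
        ⟪(A (Submodule.orthogonalProjectionOnto 𝔥ᗮ ⁅X, (Y : 𝔤)⁆) : 𝔤),
          ((Submodule.orthogonalProjectionOnto 𝔥ᗮ X : ↥𝔥ᗮ) : 𝔤)⟫_ℝ = 0)
      ↔ ((Submodule.orthogonalProjectionOnto 𝔥ᗮ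
            ⁅X, ((A (Submodule.orthogonalProjectionOnto 𝔥ᗮ X) : ↥𝔥ᗮ) : 𝔤)⁆ : ↥𝔥ᗮ) : 𝔤) = 0 := by
  set P := Submodule.orthogonalProjectionOnto 𝔥ᗮ with hP
  have key : ∀ Y : ↥𝔥ᗮ,
      ⟪(A (P ⁅X, (Y : 𝔤)⁆) : 𝔤), ((P X : ↥𝔥ᗮ) : 𝔤)⟫_ℝ
        = - ⟪(Y : 𝔤), ((P ⁅X, (A (P X) : 𝔤)⁆ : ↥𝔥ᗮ) : 𝔤)⟫_ℝ := by
    intro Y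
    have h1 : ⟪(A (P ⁅X, (Y : 𝔤)⁆) : 𝔤), ((P X : ↥𝔥ᗮ) : 𝔤)⟫_ℝ
        = ⟪((P ⁅X, (Y : 𝔤)⁆ : ↥𝔥ᗮ) : 𝔤), (A (P X) : 𝔤)⟫_ℝ := hA_sa _ _
    have h2 : ⟪((P ⁅X, (Y : 𝔤)⁆ : ↥𝔥ᗮ) : 𝔤), (A (P X) : 𝔤)⟫_ℝ
        = ⟪⁅X, (Y : 𝔤)⁆, (A (P X) : 𝔤)⟫_ℝ := by
      rw [show ⟪((P ⁅X, (Y : 𝔤)⁆ : ↥𝔥ᗮ) : 𝔤), (A (P X) : 𝔤)⟫_ℝ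
            = ⟪P ⁅X, (Y : 𝔤)⁆, A (P X)⟫_ℝ from rfl]
      exact Submodule.inner_orthogonalProjectionOnto_eq_of_mem_right (K := 𝔥ᗮ) (A (P X)) ⁅X, (Y : 𝔤)⁆
    have h3 : ⟪⁅X, (Y : 𝔤)⁆, (A (P X) : 𝔤)⟫_ℝ
        = - ⟪(Y : 𝔤), ⁅X, (A (P X) : 𝔤)⁆⟫_ℝ := by
      have := hinner_inv X (Y : 𝔤) (A (P X) : 𝔤)
      linarith
    have h4 : ⟪(Y : 𝔤), ((P ⁅X, (A (P X) : 𝔤)⁆ : ↥𝔥ᗮ) : 𝔤)⟫_ℝ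
        = ⟪(Y : 𝔤), ⁅X, (A (P X) : 𝔤)⁆⟫_ℝ := by
      rw [show ⟪(Y : 𝔤), ((P ⁅X, (A (P X) : 𝔤)⁆ : ↥𝔥ᗮ) : 𝔤)⟫_ℝ
            = ⟪Y, P ⁅X, (A (P X) : 𝔤)⁆⟫_ℝ from rfl]
      exact Submodule.inner_orthogonalProjectionOnto_eq_of_mem_left (K := 𝔥ᗮ) Y ⁅X, (A (P X) : 𝔤)⁆
    rw [h1, h2, h3, h4]
  have hz : ⟪⁅X, X⁆, ⁅X, X⁆⟫_ℝ = 0 := by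
    have h := hinner_inv ⁅X, X⁆ ⁅X, X⁆ ⁅X, X⁆
    rw [lie_self ⁅X, X⁆, ← lie_self X] at h
    linarith
  constructor
  · intro ha
    have h0 : ∀ Y : ↥𝔥ᗮ, ⟪(Y : 𝔤), ((P ⁅X, (A (P X) : 𝔤)⁆ : ↥𝔥ᗮ) : 𝔤)⟫_ℝ = 0 := by
      intro Y
      have := key Y
      rw [ha Y] at this
      linarith
    have := h0 (P ⁅X, (A (P X) : 𝔤)⁆)
    rw [inner_self_eq_zero.mp this, ← lie_self X, inner_self_eq_zero.mp hz]
  · intro hb Y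
    rw [key Y, hb, ← lie_self X, inner_self_eq_zero.mp hz, inner_zero_right, neg_zero]
end

section
/- If X ∈ 𝔪 is an equigeodesic vector, i.e. [X, AX]_𝔪 = 0 for every metric operator A : 𝔪 → 𝔪, then [X, T_i^j(P_i(X)) + T_j^i(P_j(X))]_𝔪 = 0 for all i, j ∈ {1,…,s}. -/
open scoped InnerProductSpace

/-- The subrepresentations of `H` (acting through `Ad`) on the invariant subspaces `V` and `W`
are equivalent: there is an intertwining linear isomorphism `V ≃ W`. -/
def ReprEquiv {𝔤 : Type*} [NormedAddCommGroup 𝔤] [InnerProductSpace ℝ 𝔤]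
    {H : Type*} [Group H] (Ad : H →* 𝔤 ≃ₗᵢ[ℝ] 𝔤) (V W : Submodule ℝ 𝔤) : Prop :=
  ∃ e : ↥V ≃ₗ[ℝ] ↥W, ∀ (h : H) (x : 𝔤) (hx : x ∈ V) (hx' : Ad h x ∈ V),
    (e ⟨Ad h x, hx'⟩ : 𝔤) = Ad h (e ⟨x, hx⟩ : 𝔤)

attribute [local instance 10] LieRing.toAddCommGroup

set_option linter.unusedSectionVars false

section Aux

variable {𝔤 : Type*} [NormedAddCommGroup 𝔤] [InnerProductSpace ℝ 𝔤] [FiniteDimensional ℝ 𝔤]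
    {H : Type*} [Group H] (Ad : H →* 𝔤 ≃ₗᵢ[ℝ] 𝔤)

lemma ad_inv_cancel (h : H) (w : 𝔤) : Ad h (Ad h⁻¹ w) = w := by
  have : (Ad h) * (Ad h⁻¹) = 1 := by rw [← map_mul, mul_inv_cancel, map_one]
  calc Ad h (Ad h⁻¹ w) = ((Ad h) * (Ad h⁻¹)) w := rfl
    _ = w := by rw [this]; rfl

lemma inner_ad_right (h : H) (u w : 𝔤) : ⟪Ad h u, w⟫_ℝ = ⟪u, Ad h⁻¹ w⟫_ℝ := by
  conv_lhs => rw [← ad_inv_cancel Ad h w, LinearIsometryEquiv.inner_map_map]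

lemma proj_comm (K : Submodule ℝ 𝔤) (hK : ∀ h : H, ∀ x ∈ K, Ad h x ∈ K) (h : H) (z : 𝔤) :
    (Submodule.orthogonalProjectionOnto K (Ad h z) : 𝔤) = Ad h (Submodule.orthogonalProjectionOnto K z : 𝔤) := by
  rw [← Submodule.starProjection_apply]
  apply Submodule.eq_starProjection_of_mem_of_inner_eq_zero
  · exact hK h _ (Submodule.orthogonalProjectionOnto K z).2
  · intro w hw
    rw [← map_sub, inner_ad_right]
    have hmem : z - (Submodule.orthogonalProjectionOnto K z : 𝔤) ∈ Kᗮ :=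
      Submodule.sub_starProjection_mem_orthogonal z
    rw [real_inner_comm]
    exact hmem _ (hK h⁻¹ w hw)

lemma inner_proj (K : Submodule ℝ 𝔤) {u : 𝔤} (hu : u ∈ K) (w : 𝔤) :
    ⟪u, w⟫_ℝ = ⟪u, (Submodule.orthogonalProjectionOnto K w : 𝔤)⟫_ℝ := by
  have hmem : w - (Submodule.orthogonalProjectionOnto K w : 𝔤) ∈ Kᗮ :=
    Submodule.sub_starProjection_mem_orthogonal w
  have h2 : ⟪u, w - (Submodule.orthogonalProjectionOnto K w : 𝔤)⟫_ℝ = 0 := hmem u hu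
  rw [inner_sub_right] at h2
  linarith

lemma reprEquiv_symm {V W : Submodule ℝ 𝔤} (hV : ∀ h : H, ∀ x ∈ V, Ad h x ∈ V)
    (hre : ReprEquiv Ad V W) : ReprEquiv Ad W V := by
  obtain ⟨e, he⟩ := hre
  refine ⟨e.symm, fun h y hy hy' => ?_⟩
  set x : ↥V := e.symm ⟨y, hy⟩ with hxdef
  have hex : e x = ⟨y, hy⟩ := e.apply_symm_apply _
  have hx' : Ad h (x : 𝔤) ∈ V := hV h _ x.2
  have := he h (x : 𝔤) x.2 hx'
  rw [Subtype.coe_eta, hex] at this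
  have h2 : e ⟨Ad h (x : 𝔤), hx'⟩ = ⟨Ad h y, hy'⟩ := Subtype.ext this
  have h3 : (⟨Ad h (x : 𝔤), hx'⟩ : ↥V) = e.symm ⟨Ad h y, hy'⟩ := by
    rw [← h2, e.symm_apply_apply]
  rw [← h3]

section Core

variable [LieRing 𝔤] [LieAlgebra ℝ 𝔤]

lemma core (𝔥 : Submodule ℝ 𝔤)
    {mi mj : Submodule ℝ 𝔤} (hlei : mi ≤ 𝔥ᗮ) (hlej : mj ≤ 𝔥ᗮ)
    (hinvi : ∀ h : H, ∀ x ∈ mi, Ad h x ∈ mi) (hinvj : ∀ h : H, ∀ x ∈ mj, Ad h x ∈ mj)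
    (S : ↥mi →ₗ[ℝ] ↥mj) (S' : ↥mj →ₗ[ℝ] ↥mi)
    (hSeq : ∀ (h : H) (x : 𝔤) (hx : x ∈ mi) (hx' : Ad h x ∈ mi),
      (S ⟨Ad h x, hx'⟩ : 𝔤) = Ad h (S ⟨x, hx⟩ : 𝔤))
    (hS'eq : ∀ (h : H) (y : 𝔤) (hy : y ∈ mj) (hy' : Ad h y ∈ mj),
      (S' ⟨Ad h y, hy'⟩ : 𝔤) = Ad h (S' ⟨y, hy⟩ : 𝔤))
    (hadj : ∀ (x : ↥mi) (y : ↥mj), ⟪(S x : 𝔤), (y : 𝔤)⟫_ℝ = ⟪(x : 𝔤), (S' y : 𝔤)⟫_ℝ)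
    (hSn : ∀ x : ↥mi, ‖(S x : 𝔤)‖ ≤ ‖(x : 𝔤)‖) (hS'n : ∀ y : ↥mj, ‖(S' y : 𝔤)‖ ≤ ‖(y : 𝔤)‖)
    (X : 𝔤) (hX : X ∈ 𝔥ᗮ)
    (hinner_inv : ∀ Z U V : 𝔤, ⟪⁅Z, U⁆, V⟫_ℝ + ⟪U, ⁅Z, V⁆⟫_ℝ = 0)
    (hequi : ∀ A : ↥𝔥ᗮ →ₗ[ℝ] ↥𝔥ᗮ,
      ((∀ Z : ↥𝔥ᗮ, Z ≠ 0 → 0 < ⟪(A Z : 𝔤), (Z : 𝔤)⟫_ℝ) ∧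
        (∀ Z W : ↥𝔥ᗮ, ⟪(A Z : 𝔤), (W : 𝔤)⟫_ℝ = ⟪(Z : 𝔤), (A W : 𝔤)⟫_ℝ) ∧
        (∀ (h : H) (Z : ↥𝔥ᗮ) (hZ : Ad h (Z : 𝔤) ∈ 𝔥ᗮ),
          (A ⟨Ad h (Z : 𝔤), hZ⟩ : 𝔤) = Ad h (A Z : 𝔤))) →
      ((Submodule.orthogonalProjectionOnto 𝔥ᗮ ⁅X, (A ⟨X, hX⟩ : 𝔤)⁆ : ↥𝔥ᗮ) : 𝔤) = 0) :
    ((Submodule.orthogonalProjectionOnto 𝔥ᗮ ⁅X, ((S (Submodule.orthogonalProjectionOnto mi X) : ↥mj) : 𝔤)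
        + ((S' (Submodule.orthogonalProjectionOnto mj X) : ↥mi) : 𝔤)⁆ : ↥𝔥ᗮ) : 𝔤) = 0 := by
  have hbf : ∀ z : 𝔤,
      (S (Submodule.orthogonalProjectionOnto mi z) : 𝔤) + (S' (Submodule.orthogonalProjectionOnto mj z) : 𝔤) ∈ 𝔥ᗮ :=
    fun z => Submodule.add_mem _ (hlej (S _).2) (hlei (S' _).2)
  set B : ↥𝔥ᗮ →ₗ[ℝ] ↥𝔥ᗮ :=
    { toFun := fun Z => ⟨(S (Submodule.orthogonalProjectionOnto mi (Z : 𝔤)) : 𝔤)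
        + (S' (Submodule.orthogonalProjectionOnto mj (Z : 𝔤)) : 𝔤), hbf _⟩
      map_add' := by
        intro Z W
        ext
        simp only [Submodule.coe_add, map_add, AddSubmonoid.coe_add,
          Submodule.coe_toAddSubmonoid]
        abel
      map_smul' := by
        intro c Z
        ext
        simp only [Submodule.coe_smul, map_smul, SetLike.val_smul, RingHom.id_apply,
          smul_add] } with hBdef
  have hBapp : ∀ Z : ↥𝔥ᗮ, (B Z : 𝔤) = (S (Submodule.orthogonalProjectionOnto mi (Z : 𝔤)) : 𝔤)
      + (S' (Submodule.orthogonalProjectionOnto mj (Z : 𝔤)) : 𝔤) := fun Z => rfl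
  have hPn : ∀ (K : Submodule ℝ 𝔤) (v : 𝔤), ‖(Submodule.orthogonalProjectionOnto K v : 𝔤)‖ ≤ ‖v‖ := by
    intro K v
    have h1 := (Submodule.orthogonalProjectionOnto K).le_opNorm v
    have h2 := Submodule.orthogonalProjectionOnto_norm_le K
    have h3 : ‖(Submodule.orthogonalProjectionOnto K v : 𝔤)‖ = ‖Submodule.orthogonalProjectionOnto K v‖ := rfl
    nlinarith [norm_nonneg v]
  have hBn : ∀ Z : ↥𝔥ᗮ, ‖(B Z : 𝔤)‖ ≤ 2 * ‖(Z : 𝔤)‖ := by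
    intro Z
    rw [hBapp]
    calc ‖(S (Submodule.orthogonalProjectionOnto mi (Z : 𝔤)) : 𝔤) + (S' (Submodule.orthogonalProjectionOnto mj (Z : 𝔤)) : 𝔤)‖
        ≤ ‖(S (Submodule.orthogonalProjectionOnto mi (Z : 𝔤)) : 𝔤)‖
          + ‖(S' (Submodule.orthogonalProjectionOnto mj (Z : 𝔤)) : 𝔤)‖ := norm_add_le _ _
      _ ≤ 2 * ‖(Z : 𝔤)‖ := by
          have := hSn (Submodule.orthogonalProjectionOnto mi (Z : 𝔤))
          have := hS'n (Submodule.orthogonalProjectionOnto mj (Z : 𝔤))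
          have := hPn mi (Z : 𝔤)
          have := hPn mj (Z : 𝔤)
          linarith
  set A : ↥𝔥ᗮ →ₗ[ℝ] ↥𝔥ᗮ := LinearMap.id + (4⁻¹ : ℝ) • B with hAdef
  have hAapp : ∀ Z : ↥𝔥ᗮ, (A Z : 𝔤) = (Z : 𝔤) + (4⁻¹ : ℝ) • (B Z : 𝔤) := fun Z => rfl
  have hpos : ∀ Z : ↥𝔥ᗮ, Z ≠ 0 → 0 < ⟪(A Z : 𝔤), (Z : 𝔤)⟫_ℝ := by
    intro Z hZ
    have hZ0 : (Z : 𝔤) ≠ 0 := fun h => hZ (Subtype.ext h)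
    have hn : 0 < ‖(Z : 𝔤)‖ := norm_pos_iff.mpr hZ0
    rw [hAapp, inner_add_left, real_inner_smul_left]
    have h1 : |⟪(B Z : 𝔤), (Z : 𝔤)⟫_ℝ| ≤ 2 * ‖(Z : 𝔤)‖ * ‖(Z : 𝔤)‖ := by
      calc |⟪(B Z : 𝔤), (Z : 𝔤)⟫_ℝ| ≤ ‖(B Z : 𝔤)‖ * ‖(Z : 𝔤)‖ := abs_real_inner_le_norm _ _
        _ ≤ 2 * ‖(Z : 𝔤)‖ * ‖(Z : 𝔤)‖ := by nlinarith [hBn Z, norm_nonneg ((Z : 𝔤))]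
    have h2 := real_inner_self_eq_norm_mul_norm (Z : 𝔤)
    have h3 := abs_le.mp h1
    nlinarith
  have hsym : ∀ Z W : ↥𝔥ᗮ, ⟪(A Z : 𝔤), (W : 𝔤)⟫_ℝ = ⟪(Z : 𝔤), (A W : 𝔤)⟫_ℝ := by
    have key : ∀ Z W : ↥𝔥ᗮ, ⟪(B Z : 𝔤), (W : 𝔤)⟫_ℝ = ⟪(Z : 𝔤), (B W : 𝔤)⟫_ℝ := by
      intro Z W
      rw [hBapp, hBapp, inner_add_left, inner_add_right]
      have t1 : ⟪(S (Submodule.orthogonalProjectionOnto mi (Z : 𝔤)) : 𝔤), (W : 𝔤)⟫_ℝ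
          = ⟪(Z : 𝔤), (S' (Submodule.orthogonalProjectionOnto mj (W : 𝔤)) : 𝔤)⟫_ℝ := by
        rw [inner_proj mj (S _).2 (W : 𝔤), hadj, real_inner_comm,
          ← inner_proj mi (S' _).2 (Z : 𝔤), real_inner_comm]
      have t2 : ⟪(S' (Submodule.orthogonalProjectionOnto mj (Z : 𝔤)) : 𝔤), (W : 𝔤)⟫_ℝ
          = ⟪(Z : 𝔤), (S (Submodule.orthogonalProjectionOnto mi (W : 𝔤)) : 𝔤)⟫_ℝ := by
        rw [inner_proj mi (S' _).2 (W : 𝔤), real_inner_comm, ← hadj,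
          ← inner_proj mj (S _).2 (Z : 𝔤), real_inner_comm]
      linarith
    intro Z W
    rw [hAapp, hAapp, inner_add_left, inner_add_right, real_inner_smul_left,
      real_inner_smul_right, key Z W]
  have heqv : ∀ (h : H) (Z : ↥𝔥ᗮ) (hZ : Ad h (Z : 𝔤) ∈ 𝔥ᗮ),
      (A ⟨Ad h (Z : 𝔤), hZ⟩ : 𝔤) = Ad h (A Z : 𝔤) := by
    intro h Z hZ
    have hBcomm : (B ⟨Ad h (Z : 𝔤), hZ⟩ : 𝔤) = Ad h (B Z : 𝔤) := by
      rw [hBapp, hBapp, map_add]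
      have hpi : Submodule.orthogonalProjectionOnto mi ((⟨Ad h (Z : 𝔤), hZ⟩ : ↥𝔥ᗮ) : 𝔤)
          = ⟨Ad h (Submodule.orthogonalProjectionOnto mi (Z : 𝔤) : 𝔤),
              hinvi h _ (Submodule.orthogonalProjectionOnto mi (Z : 𝔤)).2⟩ :=
        Subtype.ext (proj_comm Ad mi hinvi h (Z : 𝔤))
      have hpj : Submodule.orthogonalProjectionOnto mj ((⟨Ad h (Z : 𝔤), hZ⟩ : ↥𝔥ᗮ) : 𝔤)
          = ⟨Ad h (Submodule.orthogonalProjectionOnto mj (Z : 𝔤) : 𝔤),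
              hinvj h _ (Submodule.orthogonalProjectionOnto mj (Z : 𝔤)).2⟩ :=
        Subtype.ext (proj_comm Ad mj hinvj h (Z : 𝔤))
      rw [hpi, hpj,
        hSeq h _ (Submodule.orthogonalProjectionOnto mi (Z : 𝔤)).2 (hinvi h _ (Submodule.orthogonalProjectionOnto mi (Z : 𝔤)).2),
        hS'eq h _ (Submodule.orthogonalProjectionOnto mj (Z : 𝔤)).2 (hinvj h _ (Submodule.orthogonalProjectionOnto mj (Z : 𝔤)).2)]
      try simp [Subtype.coe_eta]
    rw [hAapp, hAapp, map_add, map_smul, hBcomm]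
  have h0 := hequi A ⟨hpos, hsym, heqv⟩
  have hid := hequi LinearMap.id ⟨fun Z hZ => by
      have hZ0 : (Z : 𝔤) ≠ 0 := fun h => hZ (Subtype.ext h)
      have hn : 0 < ‖(Z : 𝔤)‖ := norm_pos_iff.mpr hZ0
      have h2 := real_inner_self_eq_norm_mul_norm (Z : 𝔤)
      show (0 : ℝ) < ⟪(Z : 𝔤), (Z : 𝔤)⟫_ℝ
      nlinarith,
    fun Z W => rfl, fun h Z hZ => rfl⟩
  set b : 𝔤 := ((S (Submodule.orthogonalProjectionOnto mi X) : ↥mj) : 𝔤)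
      + ((S' (Submodule.orthogonalProjectionOnto mj X) : ↥mi) : 𝔤) with hb
  have hAX : (A ⟨X, hX⟩ : 𝔤) = X + (4⁻¹ : ℝ) • b := rfl
  rw [hAX] at h0
  have hmem0 : ⁅X, X + (4⁻¹ : ℝ) • b⁆ ∈ 𝔥ᗮᗮ :=
    Submodule.orthogonalProjectionOnto_eq_zero_iff.mp (by exact_mod_cast h0)
  have hmem1 : ⁅X, X⁆ ∈ 𝔥ᗮᗮ :=
    Submodule.orthogonalProjectionOnto_eq_zero_iff.mp (by exact_mod_cast hid)
  rw [ZeroMemClass.coe_eq_zero, Submodule.orthogonalProjectionOnto_eq_zero_iff,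
    Submodule.mem_orthogonal]
  intro V hV
  have e1 := hinner_inv X V (X + (4⁻¹ : ℝ) • b)
  have e2 : ⟪V, ⁅X, X + (4⁻¹ : ℝ) • b⁆⟫_ℝ = 0 :=
    (Submodule.mem_orthogonal _ _).mp hmem0 V hV
  have e3 := hinner_inv X V X
  have e4 : ⟪V, ⁅X, X⁆⟫_ℝ = 0 := (Submodule.mem_orthogonal _ _).mp hmem1 V hV
  have e5 := hinner_inv X V b
  rw [inner_add_right, real_inner_smul_right] at e1
  linarith

end Core

end Aux

/-- Compact-group setting: `𝔤` with `Ad(G)`-invariant inner product,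
`𝔪 = 𝔥ᗮ` with orthogonal decomposition `𝔪 = 𝔪₁ ⊕ ⋯ ⊕ 𝔪ₛ` into `Ad(H)`-invariant irreducible
subspaces, orthogonal projections `P_i` and intertwining maps `T_p^q` as in the paper.
If `X ∈ 𝔪` is an equigeodesic vector (`[X, AX]_𝔪 = 0` for every metric operator `A`), then
`[X, T_i^j(P_i(X)) + T_j^i(P_j(X))]_𝔪 = 0` for all `i, j`. -/
theorem statement_12
    {𝔤 : Type*} [NormedAddCommGroup 𝔤] [InnerProductSpace ℝ 𝔤] [FiniteDimensional ℝ 𝔤]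
    [LieRing 𝔤] [LieAlgebra ℝ 𝔤]
    {H : Type*} [Group H] (Ad : H →* 𝔤 ≃ₗᵢ[ℝ] 𝔤)
    (𝔥 : Submodule ℝ 𝔤)
    (hm_inv : ∀ (h : H), ∀ x ∈ 𝔥ᗮ, Ad h x ∈ 𝔥ᗮ)
    (hinner_inv : ∀ Z U V : 𝔤, ⟪⁅Z, U⁆, V⟫_ℝ + ⟪U, ⁅Z, V⁆⟫_ℝ = 0)
    {s : ℕ} (mm : Fin s → Submodule ℝ 𝔤)
    (hle : ∀ i, mm i ≤ 𝔥ᗮ)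
    (hsup : ⨆ i, mm i = 𝔥ᗮ)
    (horth : ∀ i j, i ≠ j → ∀ x ∈ mm i, ∀ y ∈ mm j, ⟪x, y⟫_ℝ = 0)
    (hmm_inv : ∀ (i : Fin s) (h : H), ∀ x ∈ mm i, Ad h x ∈ mm i)
    (hmm_irr : ∀ i : Fin s, (mm i ≠ ⊥ ∧
      ∀ W : Submodule ℝ 𝔤, W ≤ mm i → (∀ (h : H), ∀ x ∈ W, Ad h x ∈ W) → W = ⊥ ∨ W = mm i))
    -- the fixed family of maps `T_p^q : 𝔪_p → 𝔪_q`
    (T : ∀ p q : Fin s, ↥(mm p) →ₗ[ℝ] ↥(mm q))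
    (hTid : ∀ (p : Fin s) (x : ↥(mm p)), T p p x = x)
    (hT0 : ∀ p q : Fin s, ¬ ReprEquiv Ad (mm p) (mm q) → T p q = 0)
    (hTequiv : ∀ p q : Fin s, ReprEquiv Ad (mm p) (mm q) →
      (∀ (h : H) (x : 𝔤) (hx : x ∈ mm p) (hx' : Ad h x ∈ mm p),
          (T p q ⟨Ad h x, hx'⟩ : 𝔤) = Ad h (T p q ⟨x, hx⟩ : 𝔤)) ∧
        (∀ x y : ↥(mm p), ⟪(T p q x : 𝔤), (T p q y : 𝔤)⟫_ℝ = ⟪(x : 𝔤), (y : 𝔤)⟫_ℝ) ∧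
        (∀ x : ↥(mm p), T q p (T p q x) = x) ∧ (∀ y : ↥(mm q), T p q (T q p y) = y))
    (X : 𝔤) (hX : X ∈ 𝔥ᗮ)
    -- `X` is an equigeodesic vector: `[X, AX]_𝔪 = 0` for every metric operator `A`
    (hequi : ∀ A : ↥𝔥ᗮ →ₗ[ℝ] ↥𝔥ᗮ,
      ((∀ Z : ↥𝔥ᗮ, Z ≠ 0 → 0 < ⟪(A Z : 𝔤), (Z : 𝔤)⟫_ℝ) ∧
        (∀ Z W : ↥𝔥ᗮ, ⟪(A Z : 𝔤), (W : 𝔤)⟫_ℝ = ⟪(Z : 𝔤), (A W : 𝔤)⟫_ℝ) ∧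
        (∀ (h : H) (Z : ↥𝔥ᗮ) (hZ : Ad h (Z : 𝔤) ∈ 𝔥ᗮ),
          (A ⟨Ad h (Z : 𝔤), hZ⟩ : 𝔤) = Ad h (A Z : 𝔤))) →
      ((Submodule.orthogonalProjectionOnto 𝔥ᗮ ⁅X, (A ⟨X, hX⟩ : 𝔤)⁆ : ↥𝔥ᗮ) : 𝔤) = 0) :
    ∀ i j : Fin s,
      ((Submodule.orthogonalProjectionOnto 𝔥ᗮ
          ⁅X, ((T i j (Submodule.orthogonalProjectionOnto (mm i) X) : ↥(mm j)) : 𝔤)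
              + ((T j i (Submodule.orthogonalProjectionOnto (mm j) X) : ↥(mm i)) : 𝔤)⁆ : ↥𝔥ᗮ) : 𝔤) = 0 := by
  intro i j
  by_cases hij : i = j
  · subst hij
    refine core Ad 𝔥 (hle i) (hle i) (hmm_inv i) (hmm_inv i) (T i i) (T i i)
      ?_ ?_ ?_ ?_ ?_ X hX hinner_inv hequi
    · intro h x hx hx'; rw [hTid, hTid]
    · intro h x hx hx'; rw [hTid, hTid]
    · intro x y; rw [hTid, hTid]
    · intro x; rw [hTid]
    · intro x; rw [hTid]
  · by_cases hre : ReprEquiv Ad (mm i) (mm j)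
    · obtain ⟨heq, hin, hl, hr⟩ := hTequiv i j hre
      have hS'eq : ∀ (h : H) (y : 𝔤) (hy : y ∈ mm j) (hy' : Ad h y ∈ mm j),
          (T j i ⟨Ad h y, hy'⟩ : 𝔤) = Ad h (T j i ⟨y, hy⟩ : 𝔤) := by
        intro h y hy hy'
        set x : ↥(mm i) := T j i ⟨y, hy⟩ with hx
        have hex : T i j x = ⟨y, hy⟩ := hr _
        have hx' : Ad h (x : 𝔤) ∈ mm i := hmm_inv i h _ x.2
        have h1 := heq h (x : 𝔤) x.2 hx'
        rw [Subtype.coe_eta, hex] at h1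
        have h2 : T i j ⟨Ad h (x : 𝔤), hx'⟩ = ⟨Ad h y, hy'⟩ := Subtype.ext h1
        have h3 : T j i ⟨Ad h y, hy'⟩ = ⟨Ad h (x : 𝔤), hx'⟩ := by rw [← h2, hl]
        rw [h3]
      have hadj : ∀ (x : ↥(mm i)) (y : ↥(mm j)),
          ⟪(T i j x : 𝔤), (y : 𝔤)⟫_ℝ = ⟪(x : 𝔤), (T j i y : 𝔤)⟫_ℝ := by
        intro x y
        conv_lhs => rw [← hr y]
        rw [hin]
      have hSn : ∀ x : ↥(mm i), ‖(T i j x : 𝔤)‖ ≤ ‖(x : 𝔤)‖ := by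
        intro x
        have h1 := hin x x
        rw [real_inner_self_eq_norm_mul_norm, real_inner_self_eq_norm_mul_norm] at h1
        nlinarith [norm_nonneg ((T i j x : 𝔤)), norm_nonneg ((x : 𝔤))]
      have hS'n : ∀ y : ↥(mm j), ‖(T j i y : 𝔤)‖ ≤ ‖(y : 𝔤)‖ := by
        intro y
        have h1 := hin (T j i y) (T j i y)
        rw [hr] at h1
        rw [real_inner_self_eq_norm_mul_norm, real_inner_self_eq_norm_mul_norm] at h1
        nlinarith [norm_nonneg ((T j i y : 𝔤)), norm_nonneg ((y : 𝔤))]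
      exact core Ad 𝔥 (hle i) (hle j) (hmm_inv i) (hmm_inv j) (T i j) (T j i)
        heq hS'eq hadj hSn hS'n X hX hinner_inv hequi
    · have h1 : T i j = 0 := hT0 i j hre
      have h2 : T j i = 0 := hT0 j i (fun hre' => hre (reprEquiv_symm Ad (hmm_inv j) hre'))
      refine core Ad 𝔥 (hle i) (hle j) (hmm_inv i) (hmm_inv j) (T i j) (T j i)
        ?_ ?_ ?_ ?_ ?_ X hX hinner_inv hequi
      · intro h x hx hx'; simp [h1]
      · intro h y hy hy'; simp [h2]
      · intro x y; simp [h1, h2]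
      · intro x; simp [h1]
      · intro y; simp [h2]
end
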